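/- (Shapley–Folkman lemma) Let A_1, …, A_k be nonempty subsets of ℝⁿ with k ≥ n + 1, and let a ∈ ∑_{i ∈ [k]} conv(A_i) (Minkowski sum of the convex hulls). Then there exists a set of indices I ⊆ [k] of cardinality at most n such that a ∈ ∑_{i ∈ I} conv(A_i) + ∑_{i ∈ [k]∖I} A_i. -/

import Mathlib

open Finset
open scoped Pointwise

section Aux

/-- The linear functional summing the coordinates of the second block. -/
noncomputable def sfL (n k : ℕ) :
    (EuclideanSpace ℝ (Fin n) × (Fin k → ℝ)) →ₗ[ℝ] ℝ where
  toFun v := ∑ i, v.2 i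
  map_add' v w := by simp [Finset.sum_add_distrib]
  map_smul' c v := by simp [Finset.mul_sum]

lemma sfL_ker_finrank {n k : ℕ} (hk : 0 < k) :
    Module.finrank ℝ (LinearMap.ker (sfL n k)) + 1 = n + k := by
  have hsurj : LinearMap.range (sfL n k) = ⊤ := by
    rw [LinearMap.range_eq_top]
    intro c
    refine ⟨(0, Pi.single ⟨0, hk⟩ c), ?_⟩
    simp [sfL]
  have h := LinearMap.finrank_range_add_finrank_ker (sfL n k)
  rw [hsurj] at h
  have hF : Module.finrank ℝ (EuclideanSpace ℝ (Fin n) × (Fin k → ℝ)) = n + k := by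
    simp [Module.finrank_prod, finrank_euclideanSpace_fin]
  rw [hF] at h
  simp only [finrank_top, Module.finrank_self] at h
  omega

end Aux

/-- **The Shapley–Folkman lemma** (Lemma 2.3 of
Fradelizi–Madiman–Marsiglietti–Zvavitch): let `A 1, …, A k` be nonempty subsets of
`ℝⁿ` with `k ≥ n + 1`, and let `a ∈ ∑_{i ∈ [k]} conv(A i)` (Minkowski sum). Then there
is a set of indices `I ⊆ [k]` of cardinality at most `n` such that
`a ∈ ∑_{i ∈ I} conv(A i) + ∑_{i ∉ I} A i`. -/
theorem shapley_folkman {n k : ℕ} (hk : n + 1 ≤ k)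
    (A : Fin k → Set (EuclideanSpace ℝ (Fin n))) (hne : ∀ i, (A i).Nonempty)
    (a : EuclideanSpace ℝ (Fin n)) (ha : a ∈ ∑ i, convexHull ℝ (A i)) :
    ∃ I : Finset (Fin k), I.card ≤ n ∧
      a ∈ (∑ i ∈ I, convexHull ℝ (A i)) + ∑ i ∈ Iᶜ, A i := by
  classical
  have hk0 : 0 < k := by omega
  have hkR : (0:ℝ) < (k:ℝ) := by exact_mod_cast hk0
  have hkne : (k:ℝ) ≠ 0 := ne_of_gt hkR
  -- extract a representation a = ∑ x i with x i ∈ conv (A i)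
  obtain ⟨x, hx, hxsum⟩ := (Set.mem_fintype_sum _ a).1 ha
  set e : Fin k → (Fin k → ℝ) := fun i => Pi.single i (1:ℝ) with he
  -- the lifted set S in E × ℝ^k
  set S : Set (EuclideanSpace ℝ (Fin n) × (Fin k → ℝ)) :=
    ⋃ i, (fun y => (y, e i)) '' A i with hS
  -- the point p = (a/k, 𝟙/k) lies in conv S
  set p : EuclideanSpace ℝ (Fin n) × (Fin k → ℝ) :=
    ((k:ℝ)⁻¹ • a, fun _ => (k:ℝ)⁻¹) with hp_def
  have hzmem : ∀ i, (x i, e i) ∈ convexHull ℝ S := by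
    intro i
    have hmap := AffineMap.image_convexHull
      (⟨fun y => (y, e i), LinearMap.inl ℝ _ _, fun p v => by
          simp [Prod.ext_iff]⟩ :
        EuclideanSpace ℝ (Fin n) →ᵃ[ℝ] EuclideanSpace ℝ (Fin n) × (Fin k → ℝ)) (A i)
    have himg : (x i, e i) ∈
        (fun y : EuclideanSpace ℝ (Fin n) => (y, e i)) '' (convexHull ℝ (A i)) :=
      ⟨x i, hx i, rfl⟩
    rw [show ((fun y : EuclideanSpace ℝ (Fin n) => (y, e i)) '' (convexHull ℝ (A i)))
        = convexHull ℝ ((fun y : EuclideanSpace ℝ (Fin n) => (y, e i)) '' A i) from hmap]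
      at himg
    exact convexHull_mono (Set.subset_iUnion _ i) himg
  have hp : p ∈ convexHull ℝ S := by
    have hmem := (convex_convexHull ℝ S).sum_mem (t := Finset.univ)
      (w := fun _ : Fin k => (k:ℝ)⁻¹)
      (z := fun i => (x i, e i))
      (fun i _ => by positivity)
      (by simp [Finset.card_univ, mul_comm]; field_simp)
      (fun i _ => hzmem i)
    convert hmem using 1
    rw [hp_def]
    refine Prod.ext ?_ ?_
    · rw [Prod.fst_sum]
      simp only [Prod.smul_fst]
      rw [← Finset.smul_sum, hxsum]
    · rw [Prod.snd_sum]
      simp only [Prod.smul_snd]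
      rw [← Finset.smul_sum]
      funext j
      simp only [Pi.smul_apply, Finset.sum_apply, smul_eq_mul]
      simp only [he]
      rw [Fintype.sum_pi_single, mul_one]
  -- Carathéodory with affine independence
  obtain ⟨ι, hfin, z, w, hrange, haff, hwpos, hwsum, hzsum⟩ :=
    eq_pos_convex_span_of_mem_convexHull hp
  -- each z j comes from some A i
  have hzS : ∀ j, ∃ i, ∃ v, v ∈ A i ∧ (v, e i) = z j := by
    intro j
    have h := hrange (Set.mem_range_self j)
    rw [hS, Set.mem_iUnion] at h
    obtain ⟨i, v, hv, hve⟩ := h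
    exact ⟨i, v, hv, hve⟩
  choose g v hvA hvz using hzS
  have hz1 : ∀ j, (z j).1 = v j := fun j => by rw [← hvz j]
  have hz2 : ∀ j, (z j).2 = e (g j) := fun j => by rw [← hvz j]
  -- ι is nonempty
  haveI : Nonempty ι := by
    rcases isEmpty_or_nonempty ι with hempty | hne'
    · rw [Finset.univ_eq_empty, Finset.sum_empty] at hwsum
      exact absurd hwsum (by norm_num)
    · exact hne'
  -- cardinality bound: card ι ≤ n + k
  have hcard : Fintype.card ι ≤ n + k := by
    have h1 := haff.finrank_vectorSpan_add_one
    have hsub : vectorSpan ℝ (Set.range z) ≤ LinearMap.ker (sfL n k) := by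
      rw [vectorSpan_def, Submodule.span_le]
      rintro u hu
      obtain ⟨q1, hq1, q2, hq2, rfl⟩ := Set.mem_vsub.1 hu
      obtain ⟨j1, rfl⟩ := hq1
      obtain ⟨j2, rfl⟩ := hq2
      have hval : ∀ j, sfL n k (z j) = 1 := by
        intro j
        show ∑ i, (z j).2 i = 1
        rw [hz2 j, he]
        exact Fintype.sum_pi_single' (g j) 1
      simp only [SetLike.mem_coe, LinearMap.mem_ker, vsub_eq_sub, map_sub, hval, sub_self]
    have h2 : Module.finrank ℝ (vectorSpan ℝ (Set.range z)) ≤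
        Module.finrank ℝ (LinearMap.ker (sfL n k)) := Submodule.finrank_mono hsub
    have h3 := sfL_ker_finrank (n := n) hk0
    omega
  -- fibers of g
  set T : Fin k → Finset ι := fun i => Finset.univ.filter (fun j => g j = i) with hT
  have hfib : ∀ i, ∑ j ∈ T i, w j = (k:ℝ)⁻¹ := by
    intro i
    have h := congrArg (fun q => q.2 i) hzsum
    simp only [Prod.snd_sum, Prod.smul_snd, Finset.sum_apply, Pi.smul_apply,
      smul_eq_mul, hp_def] at h
    rw [hT]
    rw [Finset.sum_filter]
    rw [← h]
    refine Finset.sum_congr rfl fun j _ => ?_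
    rw [hz2 j, he]
    rcases eq_or_ne (g j) i with hgi | hgi
    · subst hgi; simp
    · simp [hgi, Pi.single_apply, Ne.symm hgi]
  have hT1 : ∀ i, 1 ≤ (T i).card := by
    intro i
    rw [Nat.one_le_iff_ne_zero, ← Nat.pos_iff_ne_zero, Finset.card_pos]
    by_contra h
    rw [Finset.not_nonempty_iff_eq_empty] at h
    have := hfib i
    rw [h, Finset.sum_empty] at this
    exact absurd this.symm (by positivity)
  have hTsum : ∑ i, (T i).card = Fintype.card ι := by
    rw [← Finset.card_univ (α := ι)]
    exact (Finset.card_eq_sum_card_fiberwise (fun j _ => Finset.mem_univ (g j))).symm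
  -- the index set I
  set I : Finset (Fin k) := Finset.univ.filter (fun i => 2 ≤ (T i).card) with hI_def
  have hInot : ∀ i ∉ I, (T i).card = 1 := by
    intro i hi
    rw [hI_def, Finset.mem_filter] at hi
    push_neg at hi
    have := hi (Finset.mem_univ i)
    have := hT1 i
    omega
  have hIcard : I.card ≤ n := by
    have h2 : 2 * I.card ≤ ∑ i ∈ I, (T i).card := by
      simpa [mul_comm] using Finset.card_nsmul_le_sum I (fun i => (T i).card) 2
        (fun i hi => (Finset.mem_filter.1 hi).2)
    have h3 : Iᶜ.card ≤ ∑ i ∈ Iᶜ, (T i).card := by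
      simpa using Finset.card_nsmul_le_sum Iᶜ (fun i => (T i).card) 1
        (fun i hi => hT1 i)
    have h4 : ∑ i ∈ I, (T i).card + ∑ i ∈ Iᶜ, (T i).card = ∑ i, (T i).card :=
      Finset.sum_add_sum_compl I _
    have h5 : I.card + Iᶜ.card = k := by
      rw [Finset.card_add_card_compl, Fintype.card_fin]
    omega
  -- the convex combinations in each fiber
  set yv : Fin k → EuclideanSpace ℝ (Fin n) :=
    fun i => ∑ j ∈ T i, ((k:ℝ) * w j) • (z j).1 with hyv
  have ha' : a = ∑ i, yv i := by
    have h := congrArg (fun q => q.1) hzsum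
    simp only [Prod.fst_sum, Prod.smul_fst, hp_def] at h
    have h2 : a = ∑ j, ((k:ℝ) * w j) • (z j).1 := by
      have := congrArg (fun u => (k:ℝ) • u) h
      simp only [smul_inv_smul₀ hkne, Finset.smul_sum, smul_smul] at this
      exact this.symm
    rw [h2, hyv]
    exact (Finset.sum_fiberwise_of_maps_to (fun j _ => Finset.mem_univ (g j)) _).symm
  have hconv : ∀ i, yv i ∈ convexHull ℝ (A i) := by
    intro i
    apply (convex_convexHull ℝ (A i)).sum_mem
    · intro j _
      have := (hwpos j).le
      positivity
    · rw [← Finset.mul_sum, hfib i, mul_inv_cancel₀ hkne]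
    · intro j hj
      have hgj : g j = i := (Finset.mem_filter.1 hj).2
      exact subset_convexHull ℝ (A i) (by rw [hz1 j, ← hgj]; exact hvA j)
  have hA : ∀ i ∉ I, yv i ∈ A i := by
    intro i hi
    obtain ⟨j0, hj0⟩ := Finset.card_eq_one.1 (hInot i hi)
    have hgj0 : g j0 = i := by
      have : j0 ∈ T i := hj0 ▸ Finset.mem_singleton_self j0
      exact (Finset.mem_filter.1 this).2
    have hw0 : w j0 = (k:ℝ)⁻¹ := by
      have := hfib i
      rw [hj0, Finset.sum_singleton] at this
      exact this
    rw [hyv]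
    simp only [hj0, Finset.sum_singleton, hw0, mul_inv_cancel₀ hkne, one_smul]
    rw [hz1 j0, ← hgj0]
    exact hvA j0
  refine ⟨I, hIcard, ?_⟩
  have hsplit : a = (∑ i ∈ I, yv i) + ∑ i ∈ Iᶜ, yv i := by
    rw [Finset.sum_add_sum_compl]; exact ha'
  rw [hsplit]
  exact Set.add_mem_add
    (Set.finset_sum_mem_finset_sum _ _ _ fun i _ => hconv i)
    (Set.finset_sum_mem_finset_sum _ _ _ fun i hi => hA i (Finset.mem_compl.1 hi))
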